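/- Suppose the arrival process is stationary in mean, E[A(t)] = λ = (λ_1,…,λ_N) for all t. If there exists a server allocation policy under which the MQMS system is strongly stable, then Σ_{n=1}^N α_n λ_n ≤ b(α) for every α ∈ W^N; in particular the arrival rate vector λ satisfies this finite system of linear inequalities. -/

import Mathlib

open MeasureTheory ProbabilityTheory Finset Filter

noncomputable section

/-- Channel state space `S`: N×K matrices with entries in {0,…,M}. -/
abbrev ChanState (N K M : ℕ) := Fin N → Fin K → Fin (M + 1)

/-- The real-valued channel matrix `C_s` of a channel state `s`. -/
def Cmat {N K M : ℕ} (s : ChanState N K M) : Fin N → Fin K → ℝ :=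
  fun n k => ((s n k : ℕ) : ℝ)

/-- The 0/1 allocation matrix `I ∈ 𝓘` determined by an assignment `f` of servers to
queues: column `k` has its single 1 in row `f k`. -/
def allocMat {N K : ℕ} (f : Fin K → Fin N) : Fin N → Fin K → ℝ :=
  fun n k => if f k = n then 1 else 0

/-- The weight `Σ_n Σ_k α_n c_{n,k} I_{n,k}` of the allocation matrix `I = allocMat f`. -/
def weight {N K : ℕ} (α : Fin N → ℝ) (c : Fin N → Fin K → ℝ) (f : Fin K → Fin N) : ℝ :=
  ∑ n, ∑ k, α n * c n k * allocMat f n k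

/-- `max_{I ∈ 𝓘} Σ_n Σ_k α_n c_{n,k} I_{n,k}`. -/
def maxWeight {N K : ℕ} [NeZero N] (α : Fin N → ℝ) (c : Fin N → Fin K → ℝ) : ℝ :=
  Finset.univ.sup' Finset.univ_nonempty (weight α c)

/-- `b(α) = Σ_{s∈S} π_s max_{I∈𝓘} Σ_n Σ_k α_n (C_s)_{n,k} I_{n,k}`. -/
def bCoef {N K M : ℕ} [NeZero N] (π : ChanState N K M → ℝ) (α : Fin N → ℝ) : ℝ :=
  ∑ s : ChanState N K M, π s * maxWeight α (Cmat s)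

/-- The rate vector `R^{(g)}` of the deterministic policy `g`. -/
def rateVec {N K M : ℕ} (π : ChanState N K M → ℝ)
    (g : ChanState N K M → Fin K → Fin N) : Fin N → ℝ :=
  fun n => ∑ s : ChanState N K M, π s * ∑ k, Cmat s n k * allocMat (g s) n k

/-- The achievable-rate polytope `P`, the convex hull of the rate vectors of the
deterministic policies. -/
def ratePolytope {N K M : ℕ} (π : ChanState N K M → ℝ) : Set (Fin N → ℝ) :=
  convexHull ℝ {r | ∃ g : ChanState N K M → Fin K → Fin N, r = rateVec π g}

/-- `W`: products of N−1 factors from {0,…,M}, viewed inside ℝ. -/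
def Wset (N M : ℕ) : Set ℝ :=
  {w | ∃ m : Fin (N - 1) → ℕ, (∀ j, m j ≤ M) ∧ w = ∏ j, (m j : ℝ)}

/-- The set `V` of nonnegative weight vectors from the paper. -/
def Vset (N M : ℕ) : Set (Fin N → ℝ) :=
  {α | (∀ n, 0 ≤ α n) ∧
    ∀ U : Finset (Fin N), U.Nonempty → U ≠ Finset.univ →
      (∃ i ∈ U, α i ≠ 0) → (∃ j ∈ Uᶜ, α j ≠ 0) →
      ∃ i ∈ U, ∃ j ∈ Uᶜ, ∃ m ∈ Finset.Icc 1 M, ∃ n ∈ Finset.Icc 1 M,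
        0 < α i ∧ 0 < α j ∧ α i * (m : ℝ) = α j * (n : ℝ)}

/-- The product Bernoulli distribution on ON-OFF (M = 1) channel states. -/
def bernoulliPi {N K : ℕ} (p : Fin N → Fin K → ℝ) : ChanState N K 1 → ℝ :=
  fun s => ∏ n, ∏ k, (if (s n k : ℕ) = 1 then p n k else 1 - p n k)

end

section Aux

lemma comp_eq_sum_indicator {Ω S : Type*} [Fintype S] (g : Ω → S) (h : S → ℝ) :
    (fun ω => h (g ω)) = fun ω => ∑ s, Set.indicator (g ⁻¹' {s}) (fun _ => h s) ω := by
  classical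
  funext ω
  rw [Finset.sum_eq_single (g ω)]
  · simp [Set.indicator]
  · intro s _ hs
    simp [Set.indicator, (Ne.symm hs)]
  · intro h'; exact absurd (Finset.mem_univ _) h'

lemma integrable_comp_finite {Ω S : Type*} [MeasurableSpace Ω] (μ : Measure Ω)
    [IsProbabilityMeasure μ] [Fintype S] [MeasurableSpace S] [MeasurableSingletonClass S]
    (g : Ω → S) (hg : Measurable g) (h : S → ℝ) :
    Integrable (fun ω => h (g ω)) μ := by
  rw [comp_eq_sum_indicator g h]
  exact integrable_finset_sum _ fun s _ =>
    (integrable_const (h s)).indicator (hg (measurableSet_singleton s))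

lemma integral_comp_finite {Ω S : Type*} [MeasurableSpace Ω] (μ : Measure Ω)
    [IsProbabilityMeasure μ] [Fintype S] [MeasurableSpace S] [MeasurableSingletonClass S]
    (g : Ω → S) (hg : Measurable g) (π : S → ℝ) (hπ0 : ∀ s, 0 ≤ π s)
    (hdist : ∀ s, μ {ω | g ω = s} = ENNReal.ofReal (π s)) (h : S → ℝ) :
    ∫ ω, h (g ω) ∂μ = ∑ s, π s * h s := by
  rw [comp_eq_sum_indicator g h, integral_finset_sum _ (fun s _ =>
    (integrable_const (h s)).indicator (hg (measurableSet_singleton s)))]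
  refine Finset.sum_congr rfl fun s _ => ?_
  rw [MeasureTheory.integral_indicator_const (h s) (hg (measurableSet_singleton s))]
  have hpre : g ⁻¹' {s} = {ω | g ω = s} := by ext ω; simp
  rw [hpre, measureReal_def, hdist s, ENNReal.toReal_ofReal (hπ0 s), smul_eq_mul, mul_comm]

end Aux

set_option maxHeartbeats 2000000 in
/-- with arrivals stationary in mean, strong stability under some policy
implies Σ_n α_n λ_n ≤ b(α) for every weight vector α ∈ W^N. -/
theorem stmt_6
    {N K M : ℕ} [NeZero N] [NeZero K] [NeZero M]
    (π : ChanState N K M → ℝ) (hπ0 : ∀ s, 0 ≤ π s) (hπ1 : ∑ s : ChanState N K M, π s = 1)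
    {Ω : Type} [MeasurableSpace Ω] (μ : Measure Ω) [IsProbabilityMeasure μ]
    (X0 : Ω → Fin N → ℝ) (hX0m : Measurable X0) (hX0nn : ∀ ω n, 0 ≤ X0 ω n)
    (hX0int : ∀ n, Integrable (fun ω => X0 ω n) μ)
    (A : ℕ → Ω → Fin N → ℝ) (hAm : ∀ t, Measurable (A t))
    (hAnn : ∀ t ω n, 0 ≤ A t ω n)
    (Amax : ℝ)
    (hA2int : ∀ t n, Integrable (fun ω => (A t ω n) ^ 2) μ)
    (hA2 : ∀ t n, ∫ ω, (A t ω n) ^ 2 ∂μ ≤ Amax ^ 2)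
    (Cch : ℕ → Ω → ChanState N K M) (hCm : ∀ t, Measurable (Cch t))
    (hCdist : ∀ t, 1 ≤ t → ∀ s, μ {ω | Cch t ω = s} = ENNReal.ofReal (π s))
    (Ipol : ℕ → Ω → Fin K → Fin N) (hIm : ∀ t, Measurable (Ipol t))
    (X : ℕ → Ω → Fin N → ℝ) (hX0eq : X 0 = X0)
    (hXrec : ∀ t, 1 ≤ t → ∀ ω n,
      X t ω n = max (X (t - 1) ω n - ∑ k, Cmat (Cch t ω) n k * allocMat (Ipol t ω) n k) 0
        + A t ω n)
    (hstable : ∀ n, ∃ B : ℝ, ∀ t : ℕ, 1 ≤ t →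
      (∑ τ ∈ Finset.range t, ∫ ω, X τ ω n ∂μ) / t ≤ B)
    (lam : Fin N → ℝ)
    (hlam : ∀ t, 1 ≤ t → ∀ n, ∫ ω, A t ω n ∂μ = lam n) :
    ∀ α : Fin N → ℝ, (∀ n, α n ∈ Wset N M) → ∑ n, α n * lam n ≤ bCoef π α := by
  intro α hα
  have hαnn : ∀ n, 0 ≤ α n := by
    intro n
    obtain ⟨m, _, h⟩ := hα n
    rw [h]; exact Finset.prod_nonneg fun j _ => Nat.cast_nonneg _
  -- service process
  set Sv : ℕ → Ω → Fin N → ℝ :=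
    fun t ω n => ∑ k, Cmat (Cch t ω) n k * allocMat (Ipol t ω) n k with hSv
  have hSnn : ∀ t ω n, 0 ≤ Sv t ω n := fun t ω n =>
    Finset.sum_nonneg fun k _ => mul_nonneg (Nat.cast_nonneg _)
      (by unfold allocMat; split_ifs <;> norm_num)
  have hSint : ∀ t n, Integrable (fun ω => Sv t ω n) μ := by
    intro t n
    exact integrable_comp_finite μ (fun ω => (Cch t ω, Ipol t ω))
      ((hCm t).prodMk (hIm t))
      (fun p => ∑ k, Cmat p.1 n k * allocMat p.2 n k)
  have hSmeas : ∀ t n, Measurable (fun ω => Sv t ω n) := fun t n =>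
    (measurable_of_countable
      (fun p : ChanState N K M × (Fin K → Fin N) => ∑ k, Cmat p.1 n k * allocMat p.2 n k)).comp
      ((hCm t).prodMk (hIm t))
  -- recursion in convenient form
  have hXsucc : ∀ t ω n,
      X (t+1) ω n = max (X t ω n - Sv (t+1) ω n) 0 + A (t+1) ω n := by
    intro t ω n
    have := hXrec (t+1) (by omega) ω n
    simpa [hSv] using this
  have hXnn : ∀ t ω n, 0 ≤ X t ω n := by
    intro t
    cases t with
    | zero => intro ω n; rw [hX0eq]; exact hX0nn ω n
    | succ t => intro ω n; rw [hXsucc t ω n]; exact add_nonneg (le_max_right _ _) (hAnn _ ω n)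
  have hAint : ∀ t n, Integrable (fun ω => A t ω n) μ := by
    intro t n
    refine Integrable.mono ((hA2int t n).add (integrable_const 1))
      (((measurable_pi_apply n).comp (hAm t)).aestronglyMeasurable)
      (Filter.Eventually.of_forall fun ω => ?_)
    have h0 := hAnn t ω n
    simp only [Real.norm_eq_abs, abs_of_nonneg h0, Pi.add_apply]
    rw [abs_of_nonneg (by positivity)]
    nlinarith
  have hXmeas : ∀ t, ∀ n, Measurable (fun ω => X t ω n) := by
    intro t
    induction t with
    | zero =>
      intro n
      have : (fun ω => X 0 ω n) = fun ω => X0 ω n := by rw [hX0eq]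
      rw [this]; exact (measurable_pi_apply n).comp hX0m
    | succ t ih =>
      intro n
      have heq : (fun ω => X (t+1) ω n)
          = fun ω => max (X t ω n - Sv (t+1) ω n) 0 + A (t+1) ω n := by
        funext ω; exact hXsucc t ω n
      rw [heq]
      exact (((ih n).sub (hSmeas (t+1) n)).max measurable_const).add
        ((measurable_pi_apply n).comp (hAm (t+1)))
  have hXint : ∀ t, ∀ n, Integrable (fun ω => X t ω n) μ := by
    intro t
    induction t with
    | zero =>
      intro n
      have : (fun ω => X 0 ω n) = fun ω => X0 ω n := by rw [hX0eq]
      rw [this]; exact hX0int n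
    | succ t ih =>
      intro n
      have heq : (fun ω => X (t+1) ω n)
          = fun ω => max (X t ω n - Sv (t+1) ω n) 0 + A (t+1) ω n := by
        funext ω; exact hXsucc t ω n
      rw [heq]
      refine Integrable.add ?_ (hAint (t+1) n)
      refine Integrable.mono (ih n)
        ((((hXmeas t n).sub (hSmeas (t+1) n)).max measurable_const).aestronglyMeasurable)
        (Filter.Eventually.of_forall fun ω => ?_)
      rw [Real.norm_eq_abs, Real.norm_eq_abs, abs_of_nonneg (le_max_right _ _),
        abs_of_nonneg (hXnn t ω n)]
      exact max_le (by linarith [hSnn (t+1) ω n]) (hXnn t ω n)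
  -- expected weighted service is at most b(α)
  have hSbound : ∀ t, 1 ≤ t → ∑ n, α n * ∫ ω, Sv t ω n ∂μ ≤ bCoef π α := by
    intro t ht
    have h1 : ∫ ω, ∑ n, α n * Sv t ω n ∂μ = ∑ n, α n * ∫ ω, Sv t ω n ∂μ := by
      rw [integral_finset_sum _ (fun n _ => (hSint t n).const_mul (α n))]
      simp_rw [integral_const_mul]
    rw [← h1]
    have h2 : ∀ ω, ∑ n, α n * Sv t ω n ≤ maxWeight α (Cmat (Cch t ω)) := by
      intro ω
      have hw : ∑ n, α n * Sv t ω n = weight α (Cmat (Cch t ω)) (Ipol t ω) := by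
        simp [weight, hSv, Finset.mul_sum, mul_assoc]
      rw [hw]
      exact Finset.le_sup' (weight α (Cmat (Cch t ω))) (Finset.mem_univ (Ipol t ω))
    have h3 : ∫ ω, ∑ n, α n * Sv t ω n ∂μ ≤ ∫ ω, maxWeight α (Cmat (Cch t ω)) ∂μ :=
      integral_mono (integrable_finset_sum _ fun n _ => (hSint t n).const_mul (α n))
        (integrable_comp_finite μ (Cch t) (hCm t) (fun s => maxWeight α (Cmat s))) h2
    have h4 : ∫ ω, maxWeight α (Cmat (Cch t ω)) ∂μ = bCoef π α :=
      integral_comp_finite μ (Cch t) (hCm t) π hπ0 (hCdist t ht)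
        (fun s => maxWeight α (Cmat s))
    linarith
  -- one-step drift
  have step : ∀ t : ℕ,
      (∑ n, α n * ∫ ω, X t ω n ∂μ) + (∑ n, α n * lam n - bCoef π α)
        ≤ ∑ n, α n * ∫ ω, X (t+1) ω n ∂μ := by
    intro t
    have h1 : ∀ n, ∫ ω, X t ω n ∂μ - ∫ ω, Sv (t+1) ω n ∂μ + lam n
        ≤ ∫ ω, X (t+1) ω n ∂μ := by
      intro n
      have hp : ∀ ω, X t ω n - Sv (t+1) ω n + A (t+1) ω n ≤ X (t+1) ω n := by
        intro ω
        rw [hXsucc t ω n]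
        exact add_le_add (le_max_left _ _) le_rfl
      have hmono : ∫ ω, (X t ω n - Sv (t+1) ω n + A (t+1) ω n) ∂μ ≤ ∫ ω, X (t+1) ω n ∂μ :=
        integral_mono (by exact ((hXint t n).sub (hSint (t+1) n)).add (hAint (t+1) n))
          (hXint (t+1) n) hp
      rwa [integral_add (by exact (hXint t n).sub (hSint (t+1) n)) (hAint (t+1) n),
        integral_sub (hXint t n) (hSint (t+1) n), hlam (t+1) (by omega) n] at hmono
    have h2 : ∑ n, α n * (∫ ω, X t ω n ∂μ - ∫ ω, Sv (t+1) ω n ∂μ + lam n)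
        ≤ ∑ n, α n * ∫ ω, X (t+1) ω n ∂μ :=
      Finset.sum_le_sum fun n _ => mul_le_mul_of_nonneg_left (h1 n) (hαnn n)
    have hexp : ∑ n, α n * (∫ ω, X t ω n ∂μ - ∫ ω, Sv (t+1) ω n ∂μ + lam n)
        = (∑ n, α n * ∫ ω, X t ω n ∂μ) - (∑ n, α n * ∫ ω, Sv (t+1) ω n ∂μ)
          + ∑ n, α n * lam n := by
      simp only [mul_sub, mul_add, Finset.sum_add_distrib, Finset.sum_sub_distrib]
    have h3 := hSbound (t+1) (by omega)
    rw [hexp] at h2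
    linarith
  -- telescoping
  have tele : ∀ t : ℕ,
      (∑ n, α n * ∫ ω, X 0 ω n ∂μ) + (t : ℝ) * (∑ n, α n * lam n - bCoef π α)
        ≤ ∑ n, α n * ∫ ω, X t ω n ∂μ := by
    intro t
    induction t with
    | zero => simp
    | succ t ih =>
      have := step t
      push_cast
      linarith
  -- contradiction with stability
  by_contra hcon
  push_neg at hcon
  set δ : ℝ := ∑ n, α n * lam n - bCoef π α with hδdef
  have hδ : 0 < δ := by simp only [hδdef]; linarith
  choose B hB using hstable
  set F0 : ℝ := ∑ n, α n * ∫ ω, X 0 ω n ∂μ with hF0def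
  set B' : ℝ := ∑ n, α n * B n with hB'def
  have key : ∀ t : ℕ, 1 ≤ t →
      (t : ℝ) * F0 + δ * ((t : ℝ) * ((t : ℝ) - 1) / 2) ≤ B' * t := by
    intro t ht
    have htR : (1 : ℝ) ≤ (t : ℝ) := by exact_mod_cast ht
    have ht0 : (0 : ℝ) < (t : ℝ) := by linarith
    have hup : ∑ τ ∈ Finset.range t, ∑ n, α n * ∫ ω, X τ ω n ∂μ ≤ B' * t := by
      rw [Finset.sum_comm]
      have hBt : (B' * t : ℝ) = ∑ n, α n * (B n * t) := by
        rw [hB'def, Finset.sum_mul]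
        exact Finset.sum_congr rfl fun n _ => by ring
      rw [hBt]
      refine Finset.sum_le_sum fun n _ => ?_
      rw [← Finset.mul_sum]
      refine mul_le_mul_of_nonneg_left ?_ (hαnn n)
      have hBn := hB n t ht
      calc ∑ τ ∈ Finset.range t, ∫ ω, X τ ω n ∂μ
          = ((∑ τ ∈ Finset.range t, ∫ ω, X τ ω n ∂μ) / t) * t := by field_simp
        _ ≤ B n * t := mul_le_mul_of_nonneg_right hBn ht0.le
    have hgauss : (∑ τ ∈ Finset.range t, (τ : ℝ)) = (t : ℝ) * ((t : ℝ) - 1) / 2 := by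
      have h := Finset.sum_range_id_mul_two t
      have h2 : ((∑ i ∈ Finset.range t, i : ℕ) : ℝ) * 2 = (t : ℝ) * ((t : ℝ) - 1) := by
        rw [show ((∑ i ∈ Finset.range t, i : ℕ) : ℝ) * 2 = (((∑ i ∈ Finset.range t, i) * 2 : ℕ) : ℝ) by push_cast; ring, h]
        push_cast [Nat.cast_sub ht]
        ring
      push_cast at h2 ⊢
      linarith
    have hlow : (t : ℝ) * F0 + δ * ((t : ℝ) * ((t : ℝ) - 1) / 2)
        ≤ ∑ τ ∈ Finset.range t, ∑ n, α n * ∫ ω, X τ ω n ∂μ := by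
      have h1 : ∀ τ ∈ Finset.range t, F0 + (τ : ℝ) * δ ≤ ∑ n, α n * ∫ ω, X τ ω n ∂μ :=
        fun τ _ => tele τ
      have h2 := Finset.sum_le_sum h1
      have h3 : ∑ τ ∈ Finset.range t, (F0 + (τ : ℝ) * δ)
          = (t : ℝ) * F0 + (∑ τ ∈ Finset.range t, (τ : ℝ)) * δ := by
        rw [Finset.sum_add_distrib, Finset.sum_const, Finset.card_range, nsmul_eq_mul,
          ← Finset.sum_mul]
      rw [h3, hgauss] at h2
      linarith
    linarith
  obtain ⟨t0, ht0⟩ := exists_nat_ge ((2 * (B' - F0)) / δ + 2)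
  have ht1 : 1 ≤ t0 + 1 := by omega
  have htR : (2 * (B' - F0)) / δ + 2 ≤ ((t0 + 1 : ℕ) : ℝ) := by
    push_cast
    push_cast at ht0
    linarith
  have hk := key (t0 + 1) ht1
  have hr : δ * ((2 * (B' - F0)) / δ) = 2 * (B' - F0) := mul_div_cancel₀ _ (ne_of_gt hδ)
  have htpos : (0 : ℝ) < ((t0 + 1 : ℕ) : ℝ) := by positivity
  nlinarith [hk, hr, hδ, htR, htpos,
    mul_nonneg (mul_nonneg hδ.le (sub_nonneg.2 htR)) htpos.le]
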